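/- For every n ≥ 1, the n×n symmetric Pascal matrix mod 2, with (i,j) entry equal to C(i+j,i) mod 2 viewed in ℤ, has determinant (−1)^{T(n)} where T(n) = #{0 ≤ i < n : i has an odd number of 1's in binary}; in particular its determinant is ±1. -/

import Mathlib

def P (i j : ℕ) : ℤ := if Odd (Nat.choose (i + j) i) then 1 else 0

lemma odd_choose_rec (n k : ℕ) :
    Odd (n.choose k) ↔ Odd ((n % 2).choose (k % 2) * ((n / 2).choose (k / 2))) := by
  have h := @Choose.choose_modEq_choose_mod_mul_choose_div_nat n k 2 ⟨Nat.prime_two⟩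
  unfold Nat.ModEq at h
  simp only [Nat.odd_iff]
  omega

lemma P_ee (a b : ℕ) : P (2 * a) (2 * b) = P a b := by
  unfold P
  rw [show 2 * a + 2 * b = 2 * (a + b) by ring]
  simp only [odd_choose_rec (2 * (a + b)) (2 * a), Nat.mul_mod_right,
    Nat.mul_div_cancel_left _ (by norm_num : 0 < 2)]
  norm_num

lemma P_eo (a b : ℕ) : P (2 * a) (2 * b + 1) = P a b := by
  unfold P
  rw [show 2 * a + (2 * b + 1) = 2 * (a + b) + 1 by ring]
  simp only [odd_choose_rec (2 * (a + b) + 1) (2 * a), Nat.mul_mod_right, Nat.mul_add_mod,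
    Nat.mul_add_div (by norm_num : 0 < 2), Nat.mul_div_cancel_left _ (by norm_num : 0 < 2)]
  norm_num

lemma P_oe (a b : ℕ) : P (2 * a + 1) (2 * b) = P a b := by
  unfold P
  rw [show 2 * a + 1 + 2 * b = 2 * (a + b) + 1 by ring]
  simp only [odd_choose_rec (2 * (a + b) + 1) (2 * a + 1), Nat.mul_add_mod,
    Nat.mul_add_div (by norm_num : 0 < 2)]
  norm_num

lemma P_oo (a b : ℕ) : P (2 * a + 1) (2 * b + 1) = 0 := by
  unfold P
  rw [show 2 * a + 1 + (2 * b + 1) = 2 * (a + b + 1) by ring]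
  simp only [odd_choose_rec (2 * (a + b + 1)) (2 * a + 1), Nat.mul_mod_right, Nat.mul_add_mod]
  simp

def T (n : ℕ) : ℕ := ((Finset.range n).filter (fun i => Odd (Nat.digits 2 i).sum)).card

lemma ds_even (m : ℕ) : Odd ((Nat.digits 2 (2 * m)).sum) ↔ Odd ((Nat.digits 2 m).sum) := by
  rcases Nat.eq_zero_or_pos m with h | h
  · simp [h]
  · rw [Nat.digits_def' (by norm_num) (by omega)]
    simp [Nat.mul_mod_right, Nat.mul_div_cancel_left _ (by norm_num : 0 < 2)]

lemma ds_odd (m : ℕ) : Odd ((Nat.digits 2 (2 * m + 1)).sum) ↔ ¬ Odd ((Nat.digits 2 m).sum) := by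
  rw [Nat.digits_def' (by norm_num) (by omega)]
  simp only [Nat.mul_add_mod, Nat.mul_add_div (by norm_num : 0 < 2)]
  rw [List.sum_cons]
  rw [Nat.odd_add]
  simp [Nat.not_odd_iff_even]

lemma T_succ (k : ℕ) :
    T (k + 1) = T k + (if Odd ((Nat.digits 2 k).sum) then 1 else 0) := by
  unfold T
  rw [Finset.range_add_one, Finset.filter_insert]
  split_ifs with h
  · rw [Finset.card_insert_of_notMem (by simp)]
  · rfl

lemma T_even (m : ℕ) : T (2 * m) = m := by
  induction m with
  | zero => simp [T]
  | succ m ih =>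
    rw [show 2 * (m + 1) = (2 * m + 1) + 1 by ring, T_succ, T_succ, ih]
    simp only [ds_odd, ds_even]
    by_cases h : Odd ((Nat.digits 2 m).sum) <;> simp [h]

lemma T_odd (m : ℕ) :
    T (2 * m + 1) = m + (if Odd ((Nat.digits 2 m).sum) then 1 else 0) := by
  rw [T_succ, T_even]
  congr 1
  simp [ds_even]

lemma T_parity (N : ℕ) : (T ((N + 1) / 2) + N / 2 + T (N / 2)) % 2 = T N % 2 := by
  rcases Nat.even_or_odd N with ⟨k, hk⟩ | ⟨k, hk⟩
  · have h1 : N = 2 * k := by omega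
    subst h1
    have h2 : (2 * k + 1) / 2 = k := by omega
    have h3 : 2 * k / 2 = k := by omega
    rw [h2, h3, T_even]
    omega
  · have h1 : N = 2 * k + 1 := by omega
    subst h1
    have h2 : (2 * k + 1 + 1) / 2 = k + 1 := by omega
    have h3 : (2 * k + 1) / 2 = k := by omega
    rw [h2, h3, T_odd, T_succ]
    omega

lemma neg_one_pow_parity (a b : ℕ) (h : a % 2 = b % 2) : (-1 : ℤ) ^ a = (-1 : ℤ) ^ b := by
  rcases Nat.even_or_odd a with ha | ha
  · have hb : Even b := Nat.even_iff.mpr (by have := Nat.even_iff.mp ha; omega)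
    rw [ha.neg_one_pow, hb.neg_one_pow]
  · have hb : Odd b := Nat.odd_iff.mpr (by have := Nat.odd_iff.mp ha; omega)
    rw [ha.neg_one_pow, hb.neg_one_pow]

noncomputable def Dn (n : ℕ) : ℤ := (Matrix.of fun i j : Fin n => P i j).det

lemma D_rec (n : ℕ) :
    Dn n = Dn ((n + 1) / 2) * ((-1 : ℤ) ^ (n / 2) * Dn (n / 2)) := by
  set m := (n + 1) / 2 with hm
  set m' := n / 2 with hm'
  have hmm : m' ≤ m := by omega
  let e : Fin m ⊕ Fin m' ≃ Fin n :=
  { toFun := Sum.elim (fun a => ⟨2 * a.val, by omega⟩) (fun b => ⟨2 * b.val + 1, by omega⟩)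
    invFun := fun i => if h : i.val % 2 = 0 then Sum.inl ⟨i.val / 2, by omega⟩
      else Sum.inr ⟨i.val / 2, by omega⟩
    left_inv := by
      rintro (a | b)
      · simp only [Sum.elim_inl]
        refine (dif_pos (show 2 * (a : ℕ) % 2 = 0 by omega)).trans ?_
        exact congrArg Sum.inl (Fin.ext (by simp [Nat.mul_div_cancel_left]))
      · simp only [Sum.elim_inr]
        refine (dif_neg (show ¬ ((2 * (b : ℕ) + 1) % 2 = 0) by omega)).trans ?_
        exact congrArg Sum.inr (Fin.ext (show (2 * (b : ℕ) + 1) / 2 = (b : ℕ) by omega))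
    right_inv := by
      intro i
      dsimp only
      by_cases h : i.val % 2 = 0
      · rw [dif_pos h]
        exact Fin.ext (by simp; omega)
      · rw [dif_neg h]
        exact Fin.ext (by simp; omega) }
  set A : Matrix (Fin m) (Fin m) ℤ := Matrix.of fun a b => P a b with hA
  set Bm : Matrix (Fin m) (Fin m') ℤ := Matrix.of fun a b => P a b with hB
  set Cm : Matrix (Fin m') (Fin m) ℤ := Matrix.of fun a b => P a b with hC
  set Q : Matrix (Fin m') (Fin m') ℤ := Matrix.of fun a b => P a b with hQ
  have hsub : (Matrix.of fun i j : Fin n => P i j).submatrix e e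
      = Matrix.fromBlocks A Bm Cm 0 := by
    ext i j
    rcases i with a | a <;> rcases j with b | b <;>
      simp [e, A, Bm, Cm, P_ee, P_eo, P_oe, P_oo]
  set J : Matrix (Fin m) (Fin m') ℤ := Matrix.of fun a b => if (a : ℕ) = b then 1 else 0 with hJ
  have hAJ : A * J = Bm := by
    ext a b
    rw [Matrix.mul_apply, Finset.sum_eq_single (⟨b.val, lt_of_lt_of_le b.isLt hmm⟩ : Fin m)]
    · simp [A, J, Bm]
    · intro c _ hc
      have : (c : ℕ) ≠ (b : ℕ) := fun h => hc (Fin.ext h)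
      simp [J, this]
    · intro h; exact absurd (Finset.mem_univ _) h
  have hCJ : Cm * J = Q := by
    ext a b
    rw [Matrix.mul_apply, Finset.sum_eq_single (⟨b.val, lt_of_lt_of_le b.isLt hmm⟩ : Fin m)]
    · simp [Cm, J, Q]
    · intro c _ hc
      have : (c : ℕ) ≠ (b : ℕ) := fun h => hc (Fin.ext h)
      simp [J, this]
    · intro h; exact absurd (Finset.mem_univ _) h
  have hfact : Matrix.fromBlocks A Bm Cm 0 * Matrix.fromBlocks 1 (-J) 0 1
      = Matrix.fromBlocks A 0 Cm (-Q) := by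
    rw [Matrix.fromBlocks_multiply]
    simp [Matrix.mul_neg, hAJ, hCJ]
  have hdetU : (Matrix.fromBlocks (1 : Matrix (Fin m) (Fin m) ℤ) (-J) 0
      (1 : Matrix (Fin m') (Fin m') ℤ)).det = 1 := by
    rw [Matrix.det_fromBlocks_zero₂₁]
    simp
  have h1 : Dn n = (Matrix.fromBlocks A Bm Cm 0).det := by
    rw [Dn, ← Matrix.det_submatrix_equiv_self e, hsub]
  have h2 : (Matrix.fromBlocks A Bm Cm 0).det
      = (Matrix.fromBlocks A 0 Cm (-Q)).det := by
    calc (Matrix.fromBlocks A Bm Cm 0).det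
        = (Matrix.fromBlocks A Bm Cm 0).det * 1 := by ring
      _ = (Matrix.fromBlocks A Bm Cm 0 * Matrix.fromBlocks 1 (-J) 0 1).det := by
          rw [Matrix.det_mul, hdetU]
      _ = _ := by rw [hfact]
  rw [h1, h2, Matrix.det_fromBlocks_zero₁₂, Matrix.det_neg]
  simp only [Fintype.card_fin]
  rfl

lemma Dn_eq (n : ℕ) : Dn n = (-1 : ℤ) ^ (T n) := by
  induction n using Nat.strong_induction_on with
  | _ n ih =>
    match n with
    | 0 => simp [Dn, T, Matrix.det_fin_zero]
    | 1 =>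
      rw [Dn, Matrix.det_fin_one]
      norm_num [T, P, Matrix.of_apply, Finset.filter_singleton]
    | (N + 2) =>
      rw [D_rec (N + 2), ih ((N + 2 + 1) / 2) (by omega), ih ((N + 2) / 2) (by omega),
        ← pow_add, ← pow_add]
      exact neg_one_pow_parity _ _ (by have := T_parity (N + 2); omega)

theorem pascal_det_thue_morse (n : ℕ) (hn : 1 ≤ n) :
    (Matrix.of fun i j : Fin n => P i j).det =
      (-1 : ℤ) ^ ((Finset.range n).filter
        (fun i => Odd (Nat.digits 2 i).sum)).card := by
  exact Dn_eq n
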